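/- Let x = sqrt(1-||z||^2) u + z and x' = sqrt(1-||z'||^2) u + z' be unit vectors with z, z' orthogonal to the unit vector u and ||z||, ||z'|| <= nu < 1. Then ||x - x'|| <= (1/sqrt(1-nu^2)) ||z - z'||. -/
import Mathlib


open scoped RealInnerProductSpace

private lemma stmt14_key (a b ν s t r : ℝ) (ha0 : 0 ≤ a) (hb0 : 0 ≤ b)
    (hzν : a ≤ ν) (hz'ν : b ≤ ν) (hν2 : (0:ℝ) < 1 - ν ^ 2)
    (hr2 : r ^ 2 = 1 - ν ^ 2) (hr0 : 0 < r)
    (hs2 : s ^ 2 = 1 - a ^ 2) (ht2 : t ^ 2 = 1 - b ^ 2) (hrs : r ≤ s) (hrt : r ≤ t) :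
    (s - t) ^ 2 ≤ (ν ^ 2 / (1 - ν ^ 2)) * (a - b) ^ 2 := by
  have hprod : (s - t) * (s + t) = b ^ 2 - a ^ 2 := by nlinarith
  have hst : 2 * r ≤ s + t := by linarith
  have hab2 : a + b ≤ 2 * ν := by linarith
  have h1 : ((s - t) * (s + t)) ^ 2 = (a - b) ^ 2 * (a + b) ^ 2 := by rw [hprod]; ring
  have h2 : (2 * r) ^ 2 ≤ (s + t) ^ 2 := by nlinarith
  have h3 : (a + b) ^ 2 ≤ (2 * ν) ^ 2 := by nlinarith
  rw [div_mul_eq_mul_div, le_div_iff₀ hν2]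
  nlinarith [mul_le_mul_of_nonneg_left h2 (sq_nonneg (s - t)),
    mul_le_mul_of_nonneg_left h3 (sq_nonneg (a - b)), h1, hr2]

/-- Let `x = √(1-‖z‖²) u + z` and `x' = √(1-‖z'‖²) u + z'` with `z, z'` orthogonal to the
unit vector `u` and `‖z‖, ‖z'‖ ≤ ν < 1`.  Then `‖x - x'‖ ≤ (1/√(1-ν²)) ‖z - z'‖`. -/
theorem stmt14 {E : Type*} [NormedAddCommGroup E] [InnerProductSpace ℝ E]
    (u z z' : E) (ν : ℝ) (hu : ‖u‖ = 1)
    (hz : ⟪u, z⟫ = 0) (hz' : ⟪u, z'⟫ = 0)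
    (hzν : ‖z‖ ≤ ν) (hz'ν : ‖z'‖ ≤ ν) (hν : ν < 1) :
    ‖(Real.sqrt (1 - ‖z‖ ^ 2) • u + z) - (Real.sqrt (1 - ‖z'‖ ^ 2) • u + z')‖
      ≤ (1 / Real.sqrt (1 - ν ^ 2)) * ‖z - z'‖ := by
  set a := ‖z‖ with ha
  set b := ‖z'‖ with hb
  have ha0 : 0 ≤ a := norm_nonneg _
  have hb0 : 0 ≤ b := norm_nonneg _
  have hν0 : 0 ≤ ν := le_trans ha0 hzν
  have hν2 : (0:ℝ) < 1 - ν ^ 2 := by nlinarith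
  set s := Real.sqrt (1 - a ^ 2) with hs
  set t := Real.sqrt (1 - b ^ 2) with ht
  set r := Real.sqrt (1 - ν ^ 2) with hr
  have hr2 : r ^ 2 = 1 - ν ^ 2 := Real.sq_sqrt hν2.le
  have hr0 : 0 < r := Real.sqrt_pos.mpr hν2
  have hs2 : s ^ 2 = 1 - a ^ 2 := Real.sq_sqrt (by nlinarith)
  have ht2 : t ^ 2 = 1 - b ^ 2 := Real.sq_sqrt (by nlinarith)
  have hrs : r ≤ s := Real.sqrt_le_sqrt (by nlinarith)
  have hrt : r ≤ t := Real.sqrt_le_sqrt (by nlinarith)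
  have hab : |a - b| ≤ ‖z - z'‖ := by rw [ha, hb]; exact abs_norm_sub_norm_le z z'
  clear_value s t r a b
  -- key inequality on scalars
  have key : (s - t) ^ 2 ≤ (ν ^ 2 / (1 - ν ^ 2)) * (a - b) ^ 2 :=
    stmt14_key a b ν s t r ha0 hb0 hzν hz'ν hν2 hr2 hr0 hs2 ht2 hrs hrt
  have habsq : (a - b) ^ 2 ≤ ‖z - z'‖ ^ 2 := by
    calc (a - b) ^ 2 = |a - b| ^ 2 := (sq_abs _).symm
      _ ≤ ‖z - z'‖ ^ 2 := pow_le_pow_left₀ (abs_nonneg _) hab 2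
  -- compute the norm squared
  have hdecomp : (s • u + z) - (t • u + z') = (s - t) • u + (z - z') := by
    rw [sub_smul]; abel
  have hinner : ⟪(s - t) • u, z - z'⟫ = 0 := by
    rw [inner_smul_left, inner_sub_right, hz, hz']
    simp
  have hnormsq : ‖(s • u + z) - (t • u + z')‖ ^ 2 = (s - t) ^ 2 + ‖z - z'‖ ^ 2 := by
    rw [hdecomp, norm_add_sq_real, hinner, norm_smul, Real.norm_eq_abs, hu]
    rw [mul_pow, sq_abs]
    ring
  have hfinal : ‖(s • u + z) - (t • u + z')‖ ^ 2 ≤ ((1 / r) * ‖z - z'‖) ^ 2 := by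
    rw [hnormsq, mul_pow, div_pow, one_pow, hr2]
    have : (s - t) ^ 2 + ‖z - z'‖ ^ 2 ≤ (ν ^ 2 / (1 - ν ^ 2)) * ‖z - z'‖ ^ 2 + ‖z - z'‖ ^ 2 := by
      have := key.trans (by
        have : (0:ℝ) ≤ ν ^ 2 / (1 - ν ^ 2) := div_nonneg (sq_nonneg ν) hν2.le
        exact mul_le_mul_of_nonneg_left habsq this)
      linarith
    calc (s - t) ^ 2 + ‖z - z'‖ ^ 2 ≤ (ν ^ 2 / (1 - ν ^ 2)) * ‖z - z'‖ ^ 2 + ‖z - z'‖ ^ 2 := this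
      _ = 1 / (1 - ν ^ 2) * ‖z - z'‖ ^ 2 := by field_simp; ring
  have hRHS : 0 ≤ (1 / r) * ‖z - z'‖ := by positivity
  have := Real.sqrt_le_sqrt hfinal
  rwa [Real.sqrt_sq (norm_nonneg _), Real.sqrt_sq hRHS] at this
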